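/- (Lipschitz continuity of the distribution map ℳ_Q.) Fix Q : 𝒳 × 𝒜 → ℝ and let {P^{Q,μ}} be a family of row-stochastic kernels on a finite set 𝒳 indexed by probability distributions μ, satisfying Σ_{x'} |P^{Q,μ₁}(x,x') − P^{Q,μ₂}(x,x')| ≤ L_p ‖μ₁−μ₂‖_TV for all x with L_p > 0, and the uniform Doeblin condition P^{Q,μ}(x,x') ≥ β ν(x') for all x, x', μ, with ν a probability distribution and β ∈ (0,1). Define ℳ_Q(μ) = μ P^{Q,μ}. Then for all probability distributions μ₁, μ₂ on 𝒳: ‖ℳ_Q(μ₁) − ℳ_Q(μ₂)‖_TV ≤ (2(1−β) + L_p) ‖μ₁ − μ₂‖_TV. -/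
import Mathlib


open Finset

/-- A probability distribution on a finite set. -/
def IsProb {𝒳 : Type*} [Fintype 𝒳] (μ : 𝒳 → ℝ) : Prop :=
  (∀ x, 0 ≤ μ x) ∧ ∑ x, μ x = 1

/-- Total variation norm: `‖m‖_TV = sup_{A ⊆ 𝒳} |Σ_{x∈A} m(x)|`. -/
noncomputable def tvNorm {𝒳 : Type*} [Fintype 𝒳] (m : 𝒳 → ℝ) : ℝ :=
  ⨆ A : Finset 𝒳, |∑ x ∈ A, m x|

/-- A row-stochastic kernel on a finite set. -/
def IsKernel {𝒳 : Type*} [Fintype 𝒳] (P : 𝒳 → 𝒳 → ℝ) : Prop :=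
  (∀ x x', 0 ≤ P x x') ∧ ∀ x, ∑ x', P x x' = 1

lemma tv_ge {𝒳 : Type*} [Fintype 𝒳] (m : 𝒳 → ℝ) (A : Finset 𝒳) :
    |∑ x ∈ A, m x| ≤ tvNorm m :=
  le_ciSup (Set.Finite.bddAbove (Set.finite_range (fun A : Finset 𝒳 => |∑ x ∈ A, m x|))) A

lemma tv_le {𝒳 : Type*} [Fintype 𝒳] (m : 𝒳 → ℝ) (C : ℝ)
    (h : ∀ A : Finset 𝒳, |∑ x ∈ A, m x| ≤ C) : tvNorm m ≤ C :=
  ciSup_le h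

lemma sum_abs_le_two_tv {𝒳 : Type*} [Fintype 𝒳] (m : 𝒳 → ℝ) (h0 : ∑ x, m x = 0) :
    ∑ x, |m x| ≤ 2 * tvNorm m := by
  set A : Finset 𝒳 := univ.filter (fun x => 0 ≤ m x) with hA
  have hsplit := Finset.sum_filter_add_sum_filter_not univ (fun x => 0 ≤ m x) m
  have hsplit' := Finset.sum_filter_add_sum_filter_not univ (fun x => 0 ≤ m x) (fun x => |m x|)
  rw [h0] at hsplit
  have h1 : ∑ x ∈ A, |m x| = ∑ x ∈ A, m x := by
    apply Finset.sum_congr rfl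
    intro x hx
    exact abs_of_nonneg (Finset.mem_filter.mp hx).2
  have h2 : ∑ x ∈ univ.filter (fun x => ¬ 0 ≤ m x), |m x| =
      ∑ x ∈ univ.filter (fun x => ¬ 0 ≤ m x), (-m x) := by
    apply Finset.sum_congr rfl
    intro x hx
    exact abs_of_neg (lt_of_not_ge (Finset.mem_filter.mp hx).2)
  have h3 : ∑ x ∈ univ.filter (fun x => ¬ 0 ≤ m x), m x = - ∑ x ∈ A, m x := by
    linarith [hsplit]
  have h4 : ∑ x, |m x| = 2 * ∑ x ∈ A, m x := by
    rw [← hsplit', h1, h2, Finset.sum_neg_distrib, h3]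
    ring
  have h5 : ∑ x ∈ A, m x ≤ tvNorm m := le_trans (le_abs_self _) (tv_ge m A)
  linarith

/-- Lipschitz continuity of the distribution map `ℳ_Q(μ) = μ P^{Q,μ}`:
`‖ℳ_Q(μ₁) − ℳ_Q(μ₂)‖_TV ≤ (2(1−β) + L_p)‖μ₁ − μ₂‖_TV`. -/
theorem distribution_map_lipschitz {𝒳 𝒜 : Type*} [Fintype 𝒳] [Fintype 𝒜]
    (Q : 𝒳 → 𝒜 → ℝ)
    (P : (𝒳 → ℝ) → 𝒳 → 𝒳 → ℝ)
    (Lp : ℝ) (hLp : 0 < Lp)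
    (hker : ∀ μ, IsProb μ → IsKernel (P μ))
    (hlip : ∀ μ₁ μ₂, IsProb μ₁ → IsProb μ₂ → ∀ x,
      ∑ x', |P μ₁ x x' - P μ₂ x x'| ≤ Lp * tvNorm (fun y => μ₁ y - μ₂ y))
    (ν : 𝒳 → ℝ) (hν : IsProb ν)
    (β : ℝ) (hβ : β ∈ Set.Ioo (0 : ℝ) 1)
    (hDoe : ∀ μ, IsProb μ → ∀ x x', β * ν x' ≤ P μ x x')
    (μ₁ μ₂ : 𝒳 → ℝ) (hμ₁ : IsProb μ₁) (hμ₂ : IsProb μ₂) :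
    tvNorm (fun x' => (∑ x, μ₁ x * P μ₁ x x') - ∑ x, μ₂ x * P μ₂ x x') ≤
      (2 * (1 - β) + Lp) * tvNorm (fun x => μ₁ x - μ₂ x) := by
  obtain ⟨hβ0, hβ1⟩ := hβ
  set tv := tvNorm (fun x => μ₁ x - μ₂ x) with htv
  have htv0 : 0 ≤ tv := le_trans (abs_nonneg _) (tv_ge _ (∅ : Finset 𝒳))
  have hmass : ∑ x, (μ₁ x - μ₂ x) = 0 := by
    rw [Finset.sum_sub_distrib, hμ₁.2, hμ₂.2]; ring
  have habs : ∑ x, |μ₁ x - μ₂ x| ≤ 2 * tv := sum_abs_le_two_tv _ hmass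
  apply tv_le
  intro A
  -- split
  have hsplit : ∑ x' ∈ A, ((∑ x, μ₁ x * P μ₁ x x') - ∑ x, μ₂ x * P μ₂ x x') =
      (∑ x, (μ₁ x - μ₂ x) * ∑ x' ∈ A, P μ₁ x x') +
      ∑ x, μ₂ x * ∑ x' ∈ A, (P μ₁ x x' - P μ₂ x x') := by
    rw [Finset.sum_sub_distrib, Finset.sum_comm, Finset.sum_comm (s := A)]
    rw [← Finset.sum_sub_distrib, ← Finset.sum_add_distrib]
    apply Finset.sum_congr rfl
    intro x _
    rw [← Finset.mul_sum, ← Finset.mul_sum, Finset.sum_sub_distrib]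
    ring
  rw [hsplit]
  have hT2 : |∑ x, μ₂ x * ∑ x' ∈ A, (P μ₁ x x' - P μ₂ x x')| ≤ Lp * tv := by
    calc |∑ x, μ₂ x * ∑ x' ∈ A, (P μ₁ x x' - P μ₂ x x')|
        ≤ ∑ x, |μ₂ x * ∑ x' ∈ A, (P μ₁ x x' - P μ₂ x x')| := Finset.abs_sum_le_sum_abs _ _
      _ ≤ ∑ x, μ₂ x * (Lp * tv) := by
          apply Finset.sum_le_sum
          intro x _
          rw [abs_mul, abs_of_nonneg (hμ₂.1 x)]
          apply mul_le_mul_of_nonneg_left _ (hμ₂.1 x)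
          calc |∑ x' ∈ A, (P μ₁ x x' - P μ₂ x x')|
              ≤ ∑ x' ∈ A, |P μ₁ x x' - P μ₂ x x'| := Finset.abs_sum_le_sum_abs _ _
            _ ≤ ∑ x', |P μ₁ x x' - P μ₂ x x'| :=
                Finset.sum_le_sum_of_subset_of_nonneg (Finset.subset_univ A)
                  (fun _ _ _ => abs_nonneg _)
            _ ≤ Lp * tv := hlip μ₁ μ₂ hμ₁ hμ₂ x
      _ = Lp * tv := by rw [← Finset.sum_mul, hμ₂.2, one_mul]
  have hT1 : |∑ x, (μ₁ x - μ₂ x) * ∑ x' ∈ A, P μ₁ x x'| ≤ 2 * (1 - β) * tv := by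
    set c : 𝒳 → ℝ := fun x => ∑ x' ∈ A, P μ₁ x x' - β * ∑ x' ∈ A, ν x' with hc
    have hrw : ∑ x, (μ₁ x - μ₂ x) * ∑ x' ∈ A, P μ₁ x x' = ∑ x, (μ₁ x - μ₂ x) * c x := by
      have : ∑ x, (μ₁ x - μ₂ x) * c x =
          ∑ x, (μ₁ x - μ₂ x) * ∑ x' ∈ A, P μ₁ x x' -
          (β * ∑ x' ∈ A, ν x') * ∑ x, (μ₁ x - μ₂ x) := by
        rw [Finset.mul_sum, ← Finset.sum_sub_distrib]
        apply Finset.sum_congr rfl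
        intro x _
        simp only [hc]
        ring
      rw [this, hmass]
      ring
    have hcbound : ∀ x, |c x| ≤ 1 - β := by
      intro x
      have hnn : 0 ≤ c x := by
        simp only [hc, Finset.mul_sum, ← Finset.sum_sub_distrib]
        apply Finset.sum_nonneg
        intro x' _
        linarith [hDoe μ₁ hμ₁ x x']
      have hub : c x ≤ 1 - β := by
        have : c x = ∑ x' ∈ A, (P μ₁ x x' - β * ν x') := by
          simp only [hc, Finset.mul_sum, Finset.sum_sub_distrib]
        rw [this]
        have h1 : ∑ x' ∈ A, (P μ₁ x x' - β * ν x') ≤ ∑ x', (P μ₁ x x' - β * ν x') :=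
          Finset.sum_le_sum_of_subset_of_nonneg (Finset.subset_univ A)
            (fun x' _ _ => by linarith [hDoe μ₁ hμ₁ x x'])
        have h2 : ∑ x', (P μ₁ x x' - β * ν x') = 1 - β := by
          rw [Finset.sum_sub_distrib, (hker μ₁ hμ₁).2 x, ← Finset.mul_sum, hν.2]
          ring
        linarith
      rw [abs_of_nonneg hnn]; exact hub
    rw [hrw]
    calc |∑ x, (μ₁ x - μ₂ x) * c x|
        ≤ ∑ x, |μ₁ x - μ₂ x| * |c x| := by
          refine le_trans (Finset.abs_sum_le_sum_abs _ _) ?_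
          apply Finset.sum_le_sum
          intro x _
          rw [abs_mul]
      _ ≤ ∑ x, |μ₁ x - μ₂ x| * (1 - β) := by
          apply Finset.sum_le_sum
          intro x _
          exact mul_le_mul_of_nonneg_left (hcbound x) (abs_nonneg _)
      _ = (1 - β) * ∑ x, |μ₁ x - μ₂ x| := by rw [← Finset.sum_mul]; ring
      _ ≤ (1 - β) * (2 * tv) := by
          apply mul_le_mul_of_nonneg_left habs
          linarith
      _ = 2 * (1 - β) * tv := by ring
  calc |(∑ x, (μ₁ x - μ₂ x) * ∑ x' ∈ A, P μ₁ x x') +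
        ∑ x, μ₂ x * ∑ x' ∈ A, (P μ₁ x x' - P μ₂ x x')|
      ≤ |∑ x, (μ₁ x - μ₂ x) * ∑ x' ∈ A, P μ₁ x x'| +
        |∑ x, μ₂ x * ∑ x' ∈ A, (P μ₁ x x' - P μ₂ x x')| := abs_add_le _ _
    _ ≤ 2 * (1 - β) * tv + Lp * tv := add_le_add hT1 hT2
    _ = (2 * (1 - β) + Lp) * tv := by ring
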